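/- arXiv:2007.14460 — 2 statements merged into one kernel-verified Lean document; each statement's English description precedes it below -/
import Mathlib

section
/- For any Hermitian matrix h of size N×N, the Schatten 1-norm (sum of absolute values of eigenvalues) is at most the entrywise 1-norm: ∑ₖ |σₖ| ≤ ∑_{j,k} |h_{jk}|. -/
open scoped BigOperators

/-- For any Hermitian matrix `h` of size `N × N`, the Schatten 1-norm
(sum of absolute values of eigenvalues) is at most the entrywise 1-norm. -/
theorem schatten_one_norm_le_entrywise_one_norm
    (N : ℕ) (h : Matrix (Fin N) (Fin N) ℂ) (hh : h.IsHermitian) :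
    ∑ k, |hh.eigenvalues k| ≤ ∑ j, ∑ k, ‖h j k‖ := by
  classical
  set U : Matrix (Fin N) (Fin N) ℂ := (hh.eigenvectorUnitary : Matrix (Fin N) (Fin N) ℂ) with hU
  set u : Fin N → Fin N → ℝ := fun j k => ‖U j k‖ with hu
  have hdiag : star (hh.eigenvectorUnitary : Matrix (Fin N) (Fin N) ℂ) * h * (hh.eigenvectorUnitary : Matrix (Fin N) (Fin N) ℂ) = Matrix.diagonal (RCLike.ofReal ∘ hh.eigenvalues) := by
    have := hh.conjStarAlgAut_star_eigenvectorUnitary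
    simpa [Unitary.conjStarAlgAut_apply] using this
  -- columns are unit vectors : ∑ j, u j k ^ 2 = 1
  have hcol : ∀ k, ∑ j, u j k ^ 2 = 1 := by
    intro k
    have h1 : (star U * U) k k = 1 := by
      rw [(Matrix.mem_unitaryGroup_iff').mp hh.eigenvectorUnitary.2]
      simp [Matrix.one_apply]
    have h2 : ∑ j, (starRingEnd ℂ) (U j k) * U j k = 1 := by
      simpa [Matrix.mul_apply, Matrix.star_apply] using h1
    calc ∑ j, u j k ^ 2 = (∑ j, (starRingEnd ℂ) (U j k) * U j k).re := by
          simp [Complex.re_sum, mul_comm, Complex.mul_conj, Complex.normSq_eq_norm_sq, sq, u]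
      _ = 1 := by rw [h2]; simp
  have hrow : ∀ j, ∑ k, u j k ^ 2 = 1 := by
    intro j
    have h1 : (U * star U) j j = 1 := by
      rw [(Matrix.mem_unitaryGroup_iff).mp hh.eigenvectorUnitary.2]
      simp [Matrix.one_apply]
    have h2 : ∑ k, U j k * (starRingEnd ℂ) (U j k) = 1 := by
      simpa [Matrix.mul_apply, Matrix.star_apply] using h1
    calc ∑ k, u j k ^ 2 = (∑ k, U j k * (starRingEnd ℂ) (U j k)).re := by
          simp [Complex.re_sum, Complex.mul_conj, Complex.normSq_eq_norm_sq, sq, u]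
      _ = 1 := by rw [h2]; simp
  -- eigenvalue as matrix entry
  have heig : ∀ k, (hh.eigenvalues k : ℂ) = ∑ j, ∑ l, (starRingEnd ℂ) (U j k) * h j l * U l k := by
    intro k
    have hentry : (star U * h * U) k k = ∑ j, ∑ l, (starRingEnd ℂ) (U j k) * h j l * U l k := by
      simp only [Matrix.mul_apply, Matrix.star_apply, Finset.sum_mul]
      rw [Finset.sum_comm]
      rfl
    rw [← hentry, hU, hdiag]
    simp [Matrix.diagonal_apply_eq]
  have key : ∀ k, |hh.eigenvalues k| ≤ ∑ j, ∑ l, u j k * ‖h j l‖ * u l k := by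
    intro k
    have : |hh.eigenvalues k| = ‖(hh.eigenvalues k : ℂ)‖ := by
      simp [Complex.norm_real]
    rw [this, heig k]
    refine (norm_sum_le _ _).trans ?_
    refine Finset.sum_le_sum fun j _ => ?_
    refine (norm_sum_le _ _).trans ?_
    refine Finset.sum_le_sum fun l _ => ?_
    simp [u, mul_comm, mul_assoc, mul_left_comm]
  calc ∑ k, |hh.eigenvalues k|
      ≤ ∑ k, ∑ j, ∑ l, u j k * ‖h j l‖ * u l k :=
        Finset.sum_le_sum fun k _ => key k
    _ = ∑ j, ∑ l, ‖h j l‖ * (∑ k, u j k * u l k) := by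
        rw [Finset.sum_comm]
        refine Finset.sum_congr rfl fun j _ => ?_
        rw [Finset.sum_comm]
        refine Finset.sum_congr rfl fun l _ => ?_
        rw [Finset.mul_sum]
        exact Finset.sum_congr rfl fun k _ => by ring
    _ ≤ ∑ j, ∑ l, ‖h j l‖ * 1 := by
        refine Finset.sum_le_sum fun j _ => Finset.sum_le_sum fun l _ => ?_
        refine mul_le_mul_of_nonneg_left ?_ (norm_nonneg _)
        have hcs := Finset.sum_mul_sq_le_sq_mul_sq Finset.univ (fun k => u j k) (fun k => u l k)
        rw [hrow j, hrow l, one_mul] at hcs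
        have hnn : (0:ℝ) ≤ ∑ k, u j k * u l k :=
          Finset.sum_nonneg fun k _ => mul_nonneg (norm_nonneg _) (norm_nonneg _)
        nlinarith
    _ = ∑ j, ∑ k, ‖h j k‖ := by simp
end

section
/- If B is a block-encoding of H with ‖H‖ ≤ 1 (i.e., ⟨0|_a B |0⟩_a = H), then two applications of B and its inverse with one intervening reflection on the ancilla register yield a block-encoding of T₂[H] = 2H² − I, the degree-2 Chebyshev polynomial of H. -/
open scoped BigOperators

/-- Qubitization: if the Hermitian unitary `B` block-encodes `H` with `‖H‖ ≤ 1`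
(`H = ⟨0|_a B |0⟩_a`), then two applications of `B` with an intervening reflection
`REF = (2|0⟩⟨0|_a − I_a) ⊗ I_s` on the ancilla register block-encode the degree-2
Chebyshev polynomial `T₂[H] = 2H² − I`: the `(0,0)`-ancilla block of
`W² = (REF·B)²` equals `2H² − 1`. -/
theorem qubitization_chebyshev_two
    {α σ : Type*} [Fintype α] [Fintype σ] [DecidableEq α] [DecidableEq σ]
    (z : α)
    (B : Matrix (α × σ) (α × σ) ℂ)
    (hBu : B ∈ Matrix.unitaryGroup (α × σ) ℂ)
    (hBh : B.IsHermitian)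
    (H : Matrix σ σ ℂ)
    (hH : ∀ j k, H j k = B (z, j) (z, k))
    (hHnorm : ‖Matrix.toEuclideanCLM (𝕜 := ℂ) (n := σ) H‖ ≤ 1) :
    let REF : Matrix (α × σ) (α × σ) ℂ :=
      Matrix.diagonal fun p => if p.1 = z then 1 else -1
    let W := REF * B
    ∀ j k, (W * W) (z, j) (z, k) = ((2 : ℂ) • (H * H) - 1) j k := by
  intro REF W j k
  have hBB : B * B = 1 := by
    have h := hBu.1
    rwa [Matrix.star_eq_conjTranspose, hBh.eq] at h
  have hWapp : ∀ (p q : α × σ), W p q = (if p.1 = z then 1 else -1) * B p q := by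
    intro p q
    simp [W, REF, Matrix.diagonal_mul]
  have key : (W * W) (z, j) (z, k)
      = ∑ p : α × σ, (if p.1 = z then 1 else -1) * (B (z, j) p * B p (z, k)) := by
    rw [Matrix.mul_apply]
    refine Finset.sum_congr rfl fun p _ => ?_
    rw [hWapp, hWapp]
    simp only [if_true]
    ring
  have split : ∀ p : α × σ,
      (if p.1 = z then (1 : ℂ) else -1) * (B (z, j) p * B p (z, k))
      = 2 * ((if p.1 = z then (1 : ℂ) else 0) * (B (z, j) p * B p (z, k)))
        - B (z, j) p * B p (z, k) := by
    intro p
    by_cases h : p.1 = z <;> simp [h] <;> ring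
  rw [key]
  simp only [split]
  rw [Finset.sum_sub_distrib, ← Finset.mul_sum]
  have h1 : ∑ p : α × σ, (if p.1 = z then (1 : ℂ) else 0) * (B (z, j) p * B p (z, k))
      = (H * H) j k := by
    rw [Matrix.mul_apply, Fintype.sum_prod_type]
    rw [Finset.sum_eq_single z]
    · simp [hH]
    · intro a _ ha; simp [ha]
    · intro h; exact absurd (Finset.mem_univ z) h
  have h2 : ∑ p : α × σ, B (z, j) p * B p (z, k) = (B * B) (z, j) (z, k) := by
    rw [Matrix.mul_apply]
  rw [h1, h2, hBB]
  simp [Matrix.one_apply, Prod.ext_iff]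
end
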